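/- Let G be an X–Y normalized graph, and let S ⊆ N(X) be a set such that no vertex of S is adjacent to a vertex of Y. Then there exists a subset S' ⊆ S with |S'| ≤ CE(S) and K(S') = K(S). -/

import Mathlib

variable {V : Type*}

/-- `K` is an `X`–`Y` separator of `G`: `K` avoids `X ∪ Y` and every walk
from a vertex of `X` to a vertex of `Y` meets `K` (i.e. there is no
`X`–`Y` path in `G \ K`). -/
def IsSeparator (G : SimpleGraph V) (X Y K : Set V) : Prop :=
  K ⊆ (X ∪ Y)ᶜ ∧
  ∀ x ∈ X, ∀ y ∈ Y, ∀ w : G.Walk x y, ∃ v ∈ w.support, v ∈ K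

/-- `NR G A B`: the vertices of `G \ B` that are not reachable from `A` in `G \ B`. -/
def NR (G : SimpleGraph V) (A B : Set V) : Set V :=
  {v | v ∉ B ∧ ¬ ∃ a ∈ A, ∃ w : G.Walk a v, ∀ x ∈ w.support, x ∉ B}

/-- `Reach G A B`: the vertices reachable from `A` in `G \ B`. -/
def Reach (G : SimpleGraph V) (A B : Set V) : Set V :=
  {v | ∃ a ∈ A, ∃ w : G.Walk a v, ∀ x ∈ w.support, x ∉ B}

/-- The order on `X`–`Y` separators: `K1 ≤ K2` iff `NR(G,Y,K1) ⊆ NR(G,Y,K2)`. -/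
def SepLE (G : SimpleGraph V) (Y K1 K2 : Set V) : Prop :=
  NR G Y K1 ⊆ NR G Y K2

/-- The strict order on `X`–`Y` separators. -/
def SepLT (G : SimpleGraph V) (Y K1 K2 : Set V) : Prop :=
  NR G Y K1 ⊆ NR G Y K2 ∧ NR G Y K1 ≠ NR G Y K2

/-- A minimal `X`–`Y` separator: no proper subset is an `X`–`Y` separator. -/
def IsMinimalSeparator (G : SimpleGraph V) (X Y K : Set V) : Prop :=
  IsSeparator G X Y K ∧ ∀ K' ⊂ K, ¬ IsSeparator G X Y K'

/-- An important `X`–`Y` separator: a minimal separator `K` such that there is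
no separator `K'` with `K < K'` and `|K'| ≤ |K|`. -/
def IsImportantSeparator (G : SimpleGraph V) (X Y K : Set V) : Prop :=
  IsMinimalSeparator G X Y K ∧
  ¬ ∃ K', IsSeparator G X Y K' ∧ SepLT G Y K K' ∧ K'.ncard ≤ K.ncard

/-- The minimum size of an `X`–`Y` separator of `G`. -/
noncomputable def minSepSize (G : SimpleGraph V) (X Y : Set V) : ℕ :=
  sInf {n | ∃ K, IsSeparator G X Y K ∧ K.ncard = n}

/-- The excess of a separator: its size minus the minimum separator size. -/
noncomputable def excess (G : SimpleGraph V) (X Y K : Set V) : ℕ :=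
  K.ncard - minSepSize G X Y

/-- The graph `Pr(G,X,Y,K)`: the vertices `NR(G,Y,K) \ X` are deleted (here:
made isolated), and every vertex of `X` is made adjacent to every vertex of `K`. -/
def PrGraph (G : SimpleGraph V) (X Y K : Set V) : SimpleGraph V where
  Adj u v := u ≠ v ∧ u ∉ NR G Y K \ X ∧ v ∉ NR G Y K \ X ∧
    (G.Adj u v ∨ (u ∈ X ∧ v ∈ K) ∨ (u ∈ K ∧ v ∈ X))
  symm := by
    constructor
    rintro u v ⟨h1, h2, h3, h4⟩
    refine ⟨h1.symm, h3, h2, ?_⟩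
    rcases h4 with h | h | h
    · exact Or.inl h.symm
    · exact Or.inr (Or.inr ⟨h.2, h.1⟩)
    · exact Or.inr (Or.inl ⟨h.2, h.1⟩)
  loopless := by constructor; rintro v ⟨h1, -⟩; exact h1 rfl

/-- `NSet G X` is `N(X)`: the set of vertices outside `X` adjacent to a vertex of `X`. -/
def NSet (G : SimpleGraph V) (X : Set V) : Set V :=
  {v | v ∉ X ∧ ∃ x ∈ X, G.Adj x v}

/-- `G` is `X`–`Y` normalized: `N(X)` is an `X`–`Y` separator and is
the unique smallest `X`–`Y` separator. -/
def Normalized (G : SimpleGraph V) (X Y : Set V) : Prop :=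
  IsSeparator G X Y (NSet G X) ∧
  ∀ K, IsSeparator G X Y K → K ≠ NSet G X → (NSet G X).ncard < K.ncard

/-- The cover excess `CE(S)`: the minimum excess of an `X`–`Y` separator disjoint from `S`. -/
noncomputable def CE (G : SimpleGraph V) (X Y S : Set V) : ℕ :=
  sInf {n | ∃ K, IsSeparator G X Y K ∧ Disjoint K S ∧ excess G X Y K = n}

/-- A witness of `S`: an `X`–`Y` separator disjoint from `S` whose excess equals `CE(S)`. -/
noncomputable def IsWitness (G : SimpleGraph V) (X Y S K : Set V) : Prop :=
  IsSeparator G X Y K ∧ Disjoint K S ∧ excess G X Y K = CE G X Y S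

/-- An important witness of `S`: a witness of `S` that is an important `X`–`Y` separator. -/
noncomputable def IsImportantWitness (G : SimpleGraph V) (X Y S K : Set V) : Prop :=
  IsWitness G X Y S K ∧ IsImportantSeparator G X Y K

section Helpers

variable {V : Type*} {G : SimpleGraph V} {A B C R : Set V} {a u v : V}

lemma reach_self (hA : a ∈ A) (ha : a ∉ B) : a ∈ Reach G A B :=
  ⟨a, hA, SimpleGraph.Walk.nil, by simp [ha]⟩

lemma reach_not_mem (h : v ∈ Reach G A B) : v ∉ B := by
  obtain ⟨a, _, w, hw⟩ := h
  exact hw v w.end_mem_support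

lemma reach_append (h : u ∈ Reach G A B) (w : G.Walk u v)
    (hw : ∀ x ∈ w.support, x ∉ B) : v ∈ Reach G A B := by
  obtain ⟨a, ha, w0, hw0⟩ := h
  refine ⟨a, ha, w0.append w, ?_⟩
  intro x hx
  rw [SimpleGraph.Walk.support_append] at hx
  rcases List.mem_append.1 hx with h1 | h1
  · exact hw0 x h1
  · exact hw x (List.mem_of_mem_tail h1)

lemma reach_extend (h : u ∈ Reach G A B) (hadj : G.Adj u v) (hv : v ∉ B) :
    v ∈ Reach G A B := by
  refine reach_append h (SimpleGraph.Walk.cons hadj SimpleGraph.Walk.nil) ?_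
  intro x hx
  simp only [SimpleGraph.Walk.support_cons, SimpleGraph.Walk.support_nil,
    List.mem_cons, List.mem_singleton] at hx
  rcases hx with rfl | rfl | h'
  · exact reach_not_mem h
  · exact hv
  · exact absurd h' (by simp)

/-- first hit of a set `C` along a walk -/
lemma first_hit : ∀ {a b : V} (w : G.Walk a b), (∃ v ∈ w.support, v ∈ C) →
    ∃ c ∈ C, ∃ u : G.Walk a c, (∀ v ∈ u.support, v ∈ C → v = c) ∧
      (∀ v ∈ u.support, v ∈ w.support) := by
  intro a b w
  induction w with
  | nil =>
    intro hw
    simp only [SimpleGraph.Walk.support_nil, List.mem_singleton] at hw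
    obtain ⟨v, rfl, hvC⟩ := hw
    exact ⟨v, hvC, SimpleGraph.Walk.nil, by simp, by simp⟩
  | @cons x y z h p ih =>
    intro hw
    by_cases hxC : x ∈ C
    · exact ⟨x, hxC, SimpleGraph.Walk.nil, by simp, by simp⟩
    · have hw' : ∃ v ∈ p.support, v ∈ C := by
        obtain ⟨v, hv, hvC⟩ := hw
        rw [SimpleGraph.Walk.support_cons] at hv
        rcases List.mem_cons.1 hv with rfl | hv
        · exact absurd hvC hxC
        · exact ⟨v, hv, hvC⟩
      obtain ⟨c, hc, u, hu1, hu2⟩ := ih hw'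
      refine ⟨c, hc, SimpleGraph.Walk.cons h u, ?_, ?_⟩
      · intro v hv hvC
        rw [SimpleGraph.Walk.support_cons] at hv
        rcases List.mem_cons.1 hv with rfl | hv
        · exact absurd hvC hxC
        · exact hu1 v hv hvC
      · intro v hv
        rw [SimpleGraph.Walk.support_cons] at hv ⊢
        rcases List.mem_cons.1 hv with rfl | hv
        · exact List.mem_cons_self
        · exact List.mem_cons_of_mem _ (hu2 v hv)

/-- crossing a region boundary -/
lemma cross_nset : ∀ {a b : V} (w : G.Walk a b), a ∈ R → b ∉ R →
    ∃ v ∈ w.support, v ∈ NSet G R := by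
  intro a b w
  induction w with
  | nil => intro ha hb; exact absurd ha hb
  | @cons x y z h p ih =>
    intro ha hb
    by_cases hd : y ∈ R
    · obtain ⟨v, hv, hvN⟩ := ih hd hb
      exact ⟨v, by rw [SimpleGraph.Walk.support_cons]; exact List.mem_cons_of_mem _ hv, hvN⟩
    · refine ⟨y, ?_, hd, x, ha, h⟩
      rw [SimpleGraph.Walk.support_cons]
      exact List.mem_cons_of_mem _ p.start_mem_support

/-- boundary edge along a walk -/
lemma exists_boundary : ∀ {a b : V} (w : G.Walk a b), a ∈ R → b ∉ R →
    ∃ u v, G.Adj u v ∧ u ∈ R ∧ v ∉ R ∧ u ∈ w.support ∧ v ∈ w.support := by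
  intro a b w
  induction w with
  | nil => intro ha hb; exact absurd ha hb
  | @cons x y z h p ih =>
    intro ha hb
    by_cases hd : y ∈ R
    · obtain ⟨u, v, h1, h2, h3, h4, h5⟩ := ih hd hb
      exact ⟨u, v, h1, h2, h3,
        by rw [SimpleGraph.Walk.support_cons]; exact List.mem_cons_of_mem _ h4,
        by rw [SimpleGraph.Walk.support_cons]; exact List.mem_cons_of_mem _ h5⟩
    · refine ⟨x, y, h, ha, hd, ?_, ?_⟩
      · rw [SimpleGraph.Walk.support_cons]; exact List.mem_cons_self
      · rw [SimpleGraph.Walk.support_cons]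
        exact List.mem_cons_of_mem _ p.start_mem_support

end Helpers
section Helpers2

variable {V : Type*} {G : SimpleGraph V} {A B R K W X Y : Set V} {a s u v : V}

lemma sep_subset_compl (hK : IsSeparator G X Y K) : K ⊆ (X ∪ Y)ᶜ := hK.1

lemma not_mem_sep_of_X (hK : IsSeparator G X Y K) (hx : v ∈ X) : v ∉ K :=
  fun h => (hK.1 h) (Or.inl hx)

lemma not_mem_sep_of_Y (hK : IsSeparator G X Y K) (hy : v ∈ Y) : v ∉ K :=
  fun h => (hK.1 h) (Or.inr hy)

lemma reachX_not_Y (hK : IsSeparator G X Y K) (hv : v ∈ Reach G X K) : v ∉ Y := by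
  intro hvY
  obtain ⟨x, hx, w, hw⟩ := hv
  obtain ⟨z, hz, hzK⟩ := hK.2 x hx v hvY w
  exact hw z hz hzK

lemma X_subset_reach (hK : IsSeparator G X Y K) : X ⊆ Reach G X K :=
  fun x hx => reach_self hx (not_mem_sep_of_X hK hx)

lemma mem_reachX_of_nset (hK : IsSeparator G X Y K) (hs : s ∈ NSet G X) (hsK : s ∉ K) :
    s ∈ Reach G X K := by
  obtain ⟨-, x, hx, hadj⟩ := hs
  exact reach_extend (reach_self hx (not_mem_sep_of_X hK hx)) hadj hsK

lemma nset_not_reachY (hK : IsSeparator G X Y K) (hs : s ∈ NSet G X) (hsK : s ∉ K) :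
    s ∉ Reach G Y K := by
  rintro ⟨y, hy, w, hw⟩
  obtain ⟨-, x, hx, hadj⟩ := hs
  obtain ⟨z, hz, hzK⟩ := hK.2 x hx y hy (SimpleGraph.Walk.cons hadj w.reverse)
  rw [SimpleGraph.Walk.support_cons] at hz
  rcases List.mem_cons.1 hz with rfl | hz
  · exact not_mem_sep_of_X hK hx hzK
  · rw [SimpleGraph.Walk.support_reverse] at hz
    exact hw z (List.mem_reverse.1 hz) hzK

lemma nset_reach_subset (hK : IsSeparator G X Y K) : NSet G (Reach G X K) ⊆ K := by
  rintro v ⟨hv, u, hu, hadj⟩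
  by_contra hvK
  exact hv (reach_extend hu hadj hvK)

lemma not_reach_region (hAR : ∀ a ∈ A, a ∉ R) (hv : v ∈ Reach G A (NSet G R)) :
    v ∉ R := by
  intro hvR
  obtain ⟨a, ha, w, hw⟩ := hv
  obtain ⟨z, hz, hzN⟩ := cross_nset w.reverse hvR (hAR a ha)
  rw [SimpleGraph.Walk.support_reverse] at hz
  exact hw z (List.mem_reverse.1 hz) hzN

/-- `K ∨ W` is a separator. -/
lemma kvee_sep (hK : IsSeparator G X Y K) (hW : IsSeparator G X Y W) :
    IsSeparator G X Y (NSet G (Reach G X K ∪ Reach G X W)) := by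
  set R : Set V := Reach G X K ∪ Reach G X W with hR
  constructor
  · rintro v ⟨hvR, u, hu, hadj⟩
    rintro (hvX | hvY)
    · exact hvR (Or.inl (reach_self hvX (not_mem_sep_of_X hK hvX)))
    · rcases hu with hu | hu
      · by_cases hvK : v ∈ K
        · exact not_mem_sep_of_Y hK hvY hvK
        · exact reachX_not_Y hK (reach_extend hu hadj hvK) hvY
      · by_cases hvW : v ∈ W
        · exact not_mem_sep_of_Y hW hvY hvW
        · exact reachX_not_Y hW (reach_extend hu hadj hvW) hvY
  · intro x hx y hy w
    refine cross_nset w (Or.inl (reach_self hx (not_mem_sep_of_X hK hx))) ?_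
    rintro (h | h)
    · exact reachX_not_Y hK h hy
    · exact reachX_not_Y hW h hy

/-- `K ∧ W` is a separator. -/
lemma kwedge_sep (hK : IsSeparator G X Y K) (hW : IsSeparator G X Y W) :
    IsSeparator G X Y (NSet G (Reach G X K ∩ Reach G X W)) := by
  constructor
  · rintro v ⟨hvR, u, hu, hadj⟩
    rintro (hvX | hvY)
    · exact hvR ⟨reach_self hvX (not_mem_sep_of_X hK hvX),
        reach_self hvX (not_mem_sep_of_X hW hvX)⟩
    · by_cases hvK : v ∈ K
      · exact not_mem_sep_of_Y hK hvY hvK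
      · exact reachX_not_Y hK (reach_extend hu.1 hadj hvK) hvY
  · intro x hx y hy w
    refine cross_nset w ⟨reach_self hx (not_mem_sep_of_X hK hx),
      reach_self hx (not_mem_sep_of_X hW hx)⟩ ?_
    rintro ⟨h, -⟩
    exact reachX_not_Y hK h hy

lemma kwedge_subset (hK : IsSeparator G X Y K) (hW : IsSeparator G X Y W) :
    NSet G (Reach G X K ∩ Reach G X W) ⊆ K ∪ W := by
  rintro v ⟨hvR, u, hu, hadj⟩
  by_cases hvK : v ∈ K
  · exact Or.inl hvK
  by_cases hvW : v ∈ W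
  · exact Or.inr hvW
  exact absurd ⟨reach_extend hu.1 hadj hvK, reach_extend hu.2 hadj hvW⟩ hvR

/-- submodularity of the vertex boundary -/
lemma nset_submod [Fintype V] (G : SimpleGraph V) (A B : Set V) :
    (NSet G (A ∪ B)).ncard + (NSet G (A ∩ B)).ncard ≤
      (NSet G A).ncard + (NSet G B).ncard := by
  have h1 : NSet G (A ∪ B) ∪ NSet G (A ∩ B) ⊆ NSet G A ∪ NSet G B := by
    rintro v (⟨hv, u, hu, hadj⟩ | ⟨hv, u, hu, hadj⟩)
    · rcases hu with hu | hu
      · exact Or.inl ⟨fun h => hv (Or.inl h), u, hu, hadj⟩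
      · exact Or.inr ⟨fun h => hv (Or.inr h), u, hu, hadj⟩
    · by_cases hvA : v ∈ A
      · exact Or.inr ⟨fun h => hv ⟨hvA, h⟩, u, hu.2, hadj⟩
      · exact Or.inl ⟨hvA, u, hu.1, hadj⟩
  have h2 : NSet G (A ∪ B) ∩ NSet G (A ∩ B) ⊆ NSet G A ∩ NSet G B := by
    rintro v ⟨⟨hv, -⟩, ⟨-, u, hu, hadj⟩⟩
    exact ⟨⟨fun h => hv (Or.inl h), u, hu.1, hadj⟩, ⟨fun h => hv (Or.inr h), u, hu.2, hadj⟩⟩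
  have e1 := Set.ncard_union_add_ncard_inter (NSet G (A ∪ B)) (NSet G (A ∩ B))
  have e2 := Set.ncard_union_add_ncard_inter (NSet G A) (NSet G B)
  have m1 : (NSet G (A ∪ B) ∪ NSet G (A ∩ B)).ncard ≤ (NSet G A ∪ NSet G B).ncard :=
    Set.ncard_le_ncard h1 (Set.toFinite _)
  have m2 : (NSet G (A ∪ B) ∩ NSet G (A ∩ B)).ncard ≤ (NSet G A ∩ NSet G B).ncard :=
    Set.ncard_le_ncard h2 (Set.toFinite _)
  omega

end Helpers2
section Helpers3

variable {V : Type*} [Fintype V] {G : SimpleGraph V} {X Y S T K : Set V}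

lemma minSep_le (hK : IsSeparator G X Y K) : minSepSize G X Y ≤ K.ncard :=
  Nat.sInf_le ⟨K, hK, rfl⟩

lemma CE_le (hK : IsSeparator G X Y K) (hd : Disjoint K S) :
    CE G X Y S ≤ excess G X Y K :=
  Nat.sInf_le ⟨K, hK, hd, rfl⟩

lemma CE_attained (hA : ∃ K, IsSeparator G X Y K ∧ Disjoint K S) :
    ∃ K, IsSeparator G X Y K ∧ Disjoint K S ∧ excess G X Y K = CE G X Y S ∧
      K.ncard = minSepSize G X Y + CE G X Y S := by
  obtain ⟨K0, h1, h2⟩ := hA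
  have hne : {n | ∃ K, IsSeparator G X Y K ∧ Disjoint K S ∧ excess G X Y K = n}.Nonempty :=
    ⟨excess G X Y K0, K0, h1, h2, rfl⟩
  obtain ⟨K, hK, hd, he⟩ := Nat.sInf_mem hne
  have hle := minSep_le hK
  refine ⟨K, hK, hd, he, ?_⟩
  have he2 : K.ncard - minSepSize G X Y = CE G X Y S := he
  omega

lemma CE_mono (hTS : T ⊆ S) (hA : ∃ K, IsSeparator G X Y K ∧ Disjoint K S) :
    CE G X Y T ≤ CE G X Y S := by
  obtain ⟨K, hK, hd, he, -⟩ := CE_attained hA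
  calc CE G X Y T ≤ excess G X Y K := CE_le hK (hd.mono_right hTS)
    _ = CE G X Y S := he

lemma excess_mono (h : K.ncard ≤ T.ncard) : excess G X Y K ≤ excess G X Y T :=
  Nat.sub_le_sub_right h _

lemma exists_sep_disjoint (hXY : Disjoint X Y) (hnorm : Normalized G X Y)
    (hS : S ⊆ NSet G X) (hSY : ∀ s ∈ S, ∀ y ∈ Y, ¬ G.Adj s y) :
    ∃ K, IsSeparator G X Y K ∧ Disjoint K S := by
  refine ⟨(X ∪ Y ∪ S)ᶜ, ⟨?_, ?_⟩, ?_⟩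
  · intro v hv
    simp only [Set.mem_compl_iff, Set.mem_union] at hv ⊢
    tauto
  · intro x hx y hy w
    by_contra hcon
    push_neg at hcon
    have hsup : ∀ v ∈ w.support, v ∈ X ∪ Y ∪ S := by
      intro v hv
      exact Set.notMem_compl_iff.mp (hcon v hv)
    have hyX : y ∉ X ∪ S := by
      rintro (h | h)
      · exact (hXY.ne_of_mem h hy) rfl
      · exact (hnorm.1.1 (hS h)) (Or.inr hy)
    obtain ⟨u, v, hadj, hu, hv, hus, hvs⟩ :=
      exists_boundary (R := X ∪ S) w (Or.inl hx) hyX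
    have hvY : v ∈ Y := by
      have := hsup v hvs
      rcases this with ((h | h) | h)
      · exact absurd (Or.inl h) hv
      · exact h
      · exact absurd (Or.inr h) hv
    rcases hu with hu | hu
    · have hvN : v ∈ NSet G X := ⟨fun h => hv (Or.inl h), u, hu, hadj⟩
      exact (hnorm.1.1 hvN) (Or.inr hvY)
    · exact hSY u hu v hvY hadj
  · rw [Set.disjoint_left]
    intro v hv hvS
    exact hv (Or.inr hvS)

end Helpers3
section Greedy

variable {V : Type*} [Fintype V] {G : SimpleGraph V} {X Y S : Set V}

lemma greedy (hAS : ∃ K, IsSeparator G X Y K ∧ Disjoint K S) (hS : S ⊆ NSet G X) :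
    ∀ n (T : Set V), T ⊆ S → T.ncard ≤ n →
      ∃ T', T' ⊆ T ∧ CE G X Y T' = CE G X Y T ∧ T'.ncard ≤ CE G X Y T := by
  intro n
  induction n with
  | zero =>
    intro T hTS hT
    have : T = ∅ := Set.ncard_eq_zero (Set.toFinite T) |>.mp (Nat.le_zero.mp hT)
    exact ⟨T, subset_rfl, rfl, by simp [this]⟩
  | succ n ih =>
    intro T hTS hT
    rcases Set.eq_empty_or_nonempty T with rfl | ⟨s, hsT⟩
    · exact ⟨∅, subset_rfl, rfl, by simp⟩
    set Tm := T \ {s} with hTmdef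
    have hTmS : Tm ⊆ S := (Set.diff_subset).trans hTS
    have hTmT : Tm ⊆ T := Set.diff_subset
    have hcard : Tm.ncard + 1 = T.ncard :=
      Set.ncard_diff_singleton_add_one hsT (Set.toFinite T)
    obtain ⟨T', hT'Tm, hCE', hcard'⟩ := ih Tm hTmS (by omega)
    have hAT : ∃ K, IsSeparator G X Y K ∧ Disjoint K T := by
      obtain ⟨K, h1, h2⟩ := hAS
      exact ⟨K, h1, h2.mono_right hTS⟩
    by_cases hc : CE G X Y Tm = CE G X Y T
    · exact ⟨T', hT'Tm.trans hTmT, by rw [hCE', hc], by rw [hc] at hcard'; exact hcard'⟩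
    · have hlt : CE G X Y Tm < CE G X Y T :=
        lt_of_le_of_ne (CE_mono hTmT hAT) hc
      have hIsub : insert s T' ⊆ T := Set.insert_subset hsT (hT'Tm.trans hTmT)
      have hAI : ∃ K, IsSeparator G X Y K ∧ Disjoint K (insert s T') := by
        obtain ⟨K, h1, h2⟩ := hAS
        exact ⟨K, h1, h2.mono_right (hIsub.trans hTS)⟩
      have hATm : ∃ K, IsSeparator G X Y K ∧ Disjoint K Tm := by
        obtain ⟨K, h1, h2⟩ := hAS
        exact ⟨K, h1, h2.mono_right hTmS⟩
      -- the push step: CE T ≤ CE (insert s T')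
      have hpush : CE G X Y T ≤ CE G X Y (insert s T') := by
        obtain ⟨K, hK, hKd, hKe, hKn⟩ := CE_attained hAI
        obtain ⟨W, hW, hWd, hWe, hWn⟩ := CE_attained hATm
        have hvee := kvee_sep hK hW
        have hwedge := kwedge_sep hK hW
        have hdT : Disjoint (NSet G ((Reach G X K) ∪ (Reach G X W))) T := by
          rw [Set.disjoint_right]
          intro t htT
          rcases eq_or_ne t s with rfl | hts
          · have : t ∈ (Reach G X K) := mem_reachX_of_nset hK (hS (hTS htT))
              (Set.disjoint_right.mp hKd (Set.mem_insert _ _))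
            exact fun hN => hN.1 (Or.inl this)
          · have htTm : t ∈ Tm := ⟨htT, hts⟩
            have : t ∈ (Reach G X W) := mem_reachX_of_nset hW (hS (hTS htT))
              (Set.disjoint_right.mp hWd htTm)
            exact fun hN => hN.1 (Or.inr this)
        have hdT' : Disjoint (NSet G ((Reach G X K) ∩ (Reach G X W))) T' := by
          rw [Set.disjoint_right]
          intro t htT'
          have h1 : t ∉ K := Set.disjoint_right.mp hKd (Set.mem_insert_of_mem _ htT')
          have h2 : t ∉ W := Set.disjoint_right.mp hWd (hT'Tm htT')
          have hN : t ∈ NSet G X := hS (hTS (hIsub (Set.mem_insert_of_mem _ htT')))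
          exact fun hmem => hmem.1 ⟨mem_reachX_of_nset hK hN h1, mem_reachX_of_nset hW hN h2⟩
        have hsub := nset_submod G (Reach G X K) (Reach G X W)
        have hm1 : (NSet G (Reach G X K)).ncard ≤ K.ncard :=
          Set.ncard_le_ncard (nset_reach_subset hK) (Set.toFinite K)
        have hm2 : (NSet G (Reach G X W)).ncard ≤ W.ncard :=
          Set.ncard_le_ncard (nset_reach_subset hW) (Set.toFinite W)
        have hwlow : minSepSize G X Y + CE G X Y T' ≤ (NSet G ((Reach G X K) ∩ (Reach G X W))).ncard := by
          have h1 := CE_le hwedge hdT'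
          have h2 := minSep_le hwedge
          have h3 : excess G X Y (NSet G ((Reach G X K) ∩ (Reach G X W))) = (NSet G ((Reach G X K) ∩ (Reach G X W))).ncard - minSepSize G X Y := rfl
          omega
        have hveesize : (NSet G ((Reach G X K) ∪ (Reach G X W))).ncard ≤ K.ncard := by
          rw [hCE'] at hwlow
          omega
        calc CE G X Y T ≤ excess G X Y (NSet G ((Reach G X K) ∪ (Reach G X W))) := CE_le hvee hdT
          _ ≤ excess G X Y K := excess_mono hveesize
          _ = CE G X Y (insert s T') := hKe
      have hle : CE G X Y (insert s T') ≤ CE G X Y T := CE_mono hIsub hAT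
      refine ⟨insert s T', hIsub, le_antisymm hle hpush, ?_⟩
      calc (insert s T').ncard ≤ T'.ncard + 1 := Set.ncard_insert_le _ _
        _ ≤ CE G X Y Tm + 1 := by omega
        _ ≤ CE G X Y T := hlt
  
end Greedy
section Important

variable {V : Type*} {G : SimpleGraph V} {A X Y K W S S' : Set V} {c s v y : V}

lemma mem_NR_iff {B : Set V} : v ∈ NR G A B ↔ v ∉ B ∧ v ∉ Reach G A B := Iff.rfl

lemma walk_reach_adj {B : Set V} : ∀ {a c : V} (w : G.Walk a c), a ∈ Reach G A B → c ∈ B →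
    (∀ v ∈ w.support, v ∈ B → v = c) → ∃ d ∈ Reach G A B, G.Adj d c := by
  intro a c w
  induction w with
  | nil => intro ha hc _; exact absurd hc (reach_not_mem ha)
  | @cons x y z h p ih =>
    intro ha hc hall
    by_cases hyB : y ∈ B
    · have hyz : y = z := hall y (by
        rw [SimpleGraph.Walk.support_cons]
        exact List.mem_cons_of_mem _ p.start_mem_support) hyB
      exact ⟨x, ha, hyz ▸ h⟩
    · refine ih (reach_extend ha h hyB) hc ?_
      intro v hv hvB
      exact hall v (by rw [SimpleGraph.Walk.support_cons]; exact List.mem_cons_of_mem _ hv) hvB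

/-- every vertex of a minimal separator has a neighbour reachable from `X`. -/
lemma min_adj (hmin : IsMinimalSeparator G X Y K) (hc : c ∈ K) :
    ∃ d ∈ Reach G X K, G.Adj d c := by
  have hKsep := hmin.1
  have hns := hmin.2 (K \ {c}) (Set.sdiff_singleton_ssubset.mpr hc)
  rw [IsSeparator, not_and] at hns
  have hns2 := hns (fun v hv => hKsep.1 hv.1)
  push_neg at hns2
  obtain ⟨x, hx, y, hy, w, hw⟩ := hns2
  have hhits : ∀ v ∈ w.support, v ∈ K → v = c := by
    intro v hv hvK
    by_contra hne
    exact hw v hv ⟨hvK, hne⟩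
  obtain ⟨v0, hv0, hv0K⟩ := hKsep.2 x hx y hy w
  obtain ⟨c', hc', u, hu1, hu2⟩ := first_hit (C := K) w ⟨v0, hv0, hv0K⟩
  have hcc : c' = c := hhits c' (hu2 c' u.end_mem_support) hc'
  subst hcc
  exact walk_reach_adj u (reach_self hx (not_mem_sep_of_X hKsep hx)) hc'
    (fun v hv => hhits v (hu2 v hv))

/-- Walks from `Y` avoiding `K''' = K∨ ∩ (K ∪ Reach(Y,K))` avoid `K` and `K∨`. -/
lemma star_avoid (hKsep : IsSeparator G X Y K) (hWsep : IsSeparator G X Y W)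
    (hmin : IsMinimalSeparator G X Y K) (hy : y ∈ Y) (w : G.Walk y v)
    (hw3 : ∀ z ∈ w.support, z ∉ NSet G (Reach G X K ∪ Reach G X W) ∩ (K ∪ Reach G Y K)) :
    ∀ z ∈ w.support, z ∉ K ∪ NSet G (Reach G X K ∪ Reach G X W) := by
  by_contra hcon
  push_neg at hcon
  obtain ⟨z0, hz0, hz0C⟩ := hcon
  obtain ⟨c, hcC, u, hu1, hu2⟩ :=
    first_hit (C := K ∪ NSet G (Reach G X K ∪ Reach G X W)) w ⟨z0, hz0, hz0C⟩
  have hc3 : c ∉ NSet G (Reach G X K ∪ Reach G X W) ∩ (K ∪ Reach G Y K) :=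
    hw3 c (hu2 c u.end_mem_support)
  by_cases hcK : c ∈ K
  · have hcKv : c ∉ NSet G (Reach G X K ∪ Reach G X W) := fun h => hc3 ⟨h, Or.inl hcK⟩
    obtain ⟨d, hd, hadj⟩ := min_adj hmin hcK
    have hcR : c ∈ Reach G X K ∪ Reach G X W := by
      by_contra hcR
      exact hcKv ⟨hcR, d, Or.inl hd, hadj⟩
    have hcR2 : c ∈ Reach G X W := by
      rcases hcR with h | h
      · exact absurd hcK (reach_not_mem h)
      · exact h
    have huKv : ∀ z ∈ u.support, z ∉ NSet G (Reach G X K ∪ Reach G X W) := by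
      intro z hz hzKv
      exact hcKv ((hu1 z hz (Or.inr hzKv)) ▸ hzKv)
    have hcreach : c ∈ Reach G Y (NSet G (Reach G X K ∪ Reach G X W)) := ⟨y, hy, u, huKv⟩
    have : c ∉ Reach G X K ∪ Reach G X W := by
      refine not_reach_region (fun a ha => ?_) hcreach
      rintro (h | h)
      · exact reachX_not_Y hKsep h ha
      · exact reachX_not_Y hWsep h ha
    exact this (Or.inr hcR2)
  · have hcKv : c ∈ NSet G (Reach G X K ∪ Reach G X W) := by
      rcases hcC with h | h
      · exact absurd h hcK
      · exact h
    have huK : ∀ z ∈ u.support, z ∉ K := by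
      intro z hz hzK
      exact hcK ((hu1 z hz (Or.inl hzK)) ▸ hzK)
    have : c ∈ Reach G Y K := ⟨y, hy, u, huK⟩
    exact hc3 ⟨hcKv, Or.inr this⟩

end Important
section Main

variable {V : Type*} [Fintype V] {G : SimpleGraph V} {X Y S S' K : Set V} {s : V}

lemma important_avoids
    (hS : S ⊆ NSet G X) (hS' : S' ⊆ S)
    (hAS : ∃ K0, IsSeparator G X Y K0 ∧ Disjoint K0 S)
    (hCE : CE G X Y S' = CE G X Y S)
    (hmin : IsMinimalSeparator G X Y K)
    (himp : ¬ ∃ K', IsSeparator G X Y K' ∧ SepLT G Y K K' ∧ K'.ncard ≤ K.ncard)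
    (hKd : Disjoint K S') (hKe : excess G X Y K = CE G X Y S')
    (hsS : s ∈ S) : s ∉ K := by
  by_contra hsK
  have hKsep := hmin.1
  have hKn : K.ncard = minSepSize G X Y + CE G X Y S' := by
    have h1 := minSep_le hKsep
    have h2 : K.ncard - minSepSize G X Y = CE G X Y S' := hKe
    omega
  -- CE of the augmented set
  have hIsubS : insert s S' ⊆ S := Set.insert_subset hsS hS'
  have hAI : ∃ K0, IsSeparator G X Y K0 ∧ Disjoint K0 (insert s S') := by
    obtain ⟨K0, h1, h2⟩ := hAS
    exact ⟨K0, h1, h2.mono_right hIsubS⟩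
  have hCEI : CE G X Y (insert s S') = CE G X Y S' := by
    have h1 : CE G X Y (insert s S') ≤ CE G X Y S := CE_mono hIsubS hAS
    have h2 : CE G X Y S' ≤ CE G X Y (insert s S') :=
      CE_mono (Set.subset_insert _ _) hAI
    omega
  obtain ⟨W, hWsep, hWd, hWe, hWn⟩ := CE_attained hAI
  rw [hCEI] at hWn
  -- notation
  have hsW : s ∉ W := Set.disjoint_right.mp hWd (Set.mem_insert _ _)
  have hsR2 : s ∈ Reach G X W := mem_reachX_of_nset hWsep (hS hsS) hsW
  have hvee := kvee_sep hKsep hWsep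
  have hwedge := kwedge_sep hKsep hWsep
  -- size of K∨
  have hdS' : Disjoint (NSet G (Reach G X K ∩ Reach G X W)) S' := by
    rw [Set.disjoint_right]
    intro t htS'
    have h1 : t ∉ K := Set.disjoint_right.mp hKd htS'
    have h2 : t ∉ W := Set.disjoint_right.mp hWd (Set.mem_insert_of_mem _ htS')
    have hN : t ∈ NSet G X := hS (hS' htS')
    exact fun hmem => hmem.1 ⟨mem_reachX_of_nset hKsep hN h1, mem_reachX_of_nset hWsep hN h2⟩
  have hm1 : (NSet G (Reach G X K)).ncard ≤ K.ncard :=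
    Set.ncard_le_ncard (nset_reach_subset hKsep) (Set.toFinite K)
  have hm2 : (NSet G (Reach G X W)).ncard ≤ W.ncard :=
    Set.ncard_le_ncard (nset_reach_subset hWsep) (Set.toFinite W)
  have hsubmod := nset_submod G (Reach G X K) (Reach G X W)
  have hwlow : minSepSize G X Y + CE G X Y S' ≤
      (NSet G (Reach G X K ∩ Reach G X W)).ncard := by
    have h1 := CE_le hwedge hdS'
    have h2 := minSep_le hwedge
    have h3 : excess G X Y (NSet G (Reach G X K ∩ Reach G X W)) =
        (NSet G (Reach G X K ∩ Reach G X W)).ncard - minSepSize G X Y := rfl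
    omega
  have hveesize : (NSet G (Reach G X K ∪ Reach G X W)).ncard ≤ K.ncard := by omega
  -- the pushed separator K'''
  set K3 : Set V := NSet G (Reach G X K ∪ Reach G X W) ∩ (K ∪ Reach G Y K) with hK3def
  have hK3size : K3.ncard ≤ K.ncard :=
    le_trans (Set.ncard_le_ncard Set.inter_subset_left (Set.toFinite _)) hveesize
  have hK3sep : IsSeparator G X Y K3 := by
    constructor
    · exact fun v hv => hvee.1 hv.1
    · intro x hx y hy w
      by_contra hno
      push_neg at hno
      have hstar := star_avoid hKsep hWsep hmin hy w.reverse (by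
        intro z hz
        rw [SimpleGraph.Walk.support_reverse] at hz
        exact hno z (List.mem_reverse.1 hz))
      obtain ⟨z, hz, hzKv⟩ := hvee.2 x hx y hy w
      have : z ∈ w.reverse.support := by
        rw [SimpleGraph.Walk.support_reverse]; exact List.mem_reverse.2 hz
      exact hstar z this (Or.inr hzKv)
  have hNRsub : NR G Y K ⊆ NR G Y K3 := by
    intro v hv
    rw [mem_NR_iff] at hv ⊢
    obtain ⟨hv1, hv2⟩ := hv
    constructor
    · intro hvK3
      rcases hvK3.2 with h | h
      · exact hv1 h
      · exact hv2 h
    · rintro ⟨y, hy, w, hw⟩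
      have hstar := star_avoid hKsep hWsep hmin hy w hw
      exact hv2 ⟨y, hy, w, fun z hz => fun hzK => hstar z hz (Or.inl hzK)⟩
  have hsK3 : s ∉ K3 := by
    intro h
    exact h.1.1 (Or.inr hsR2)
  have hsNR3 : s ∈ NR G Y K3 :=
    mem_NR_iff.mpr ⟨hsK3, nset_not_reachY hK3sep (hS hsS) hsK3⟩
  have hne : NR G Y K ≠ NR G Y K3 := by
    intro heq
    rw [← heq] at hsNR3
    exact hsNR3.1 hsK
  exact himp ⟨K3, hK3sep, ⟨hNRsub, hne⟩, hK3size⟩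

end Main

/-- Let `G` be an `X`–`Y` normalized graph and `S ⊆ N(X)` a
set no vertex of which is adjacent to a vertex of `Y`.  Then there exists
`S' ⊆ S` with `|S'| ≤ CE(S)` and `K(S') = K(S)` (the latter expressed by:
the important witnesses of `S'` and of `S` coincide). -/
theorem exists_small_subset_same_important_witness
    {V : Type*} [Fintype V] (G : SimpleGraph V) (X Y S : Set V)
    (hXY : Disjoint X Y) (hnorm : Normalized G X Y)
    (hS : S ⊆ NSet G X) (hSY : ∀ s ∈ S, ∀ y ∈ Y, ¬ G.Adj s y) :
    ∃ S' ⊆ S, S'.ncard ≤ CE G X Y S ∧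
      ∀ K : Set V, IsImportantWitness G X Y S' K ↔ IsImportantWitness G X Y S K := by
  have hAS := exists_sep_disjoint hXY hnorm hS hSY
  obtain ⟨S', hS'S, hCE', hcard⟩ := greedy hAS hS S.ncard S subset_rfl le_rfl
  refine ⟨S', hS'S, hcard, ?_⟩
  intro K
  constructor
  · rintro ⟨⟨hsep, hdisj, hexc⟩, himp⟩
    have hKdS : Disjoint K S := Set.disjoint_right.mpr fun _ hsS =>
      important_avoids hS hS'S hAS hCE' himp.1 himp.2 hdisj hexc hsS
    exact ⟨⟨hsep, hKdS, by rw [hexc, hCE']⟩, himp⟩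
  · rintro ⟨⟨hsep, hdisj, hexc⟩, himp⟩
    exact ⟨⟨hsep, hdisj.mono_right hS'S, by rw [hexc, hCE']⟩, himp⟩
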